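/- Let d ≥ K ≥ 2, n ≥ 1, N = Kn, and τ > 0. For every W ∈ OB(d,K) and every H ∈ OB(d,N), the cross-entropy risk satisfies f(W,H) ≥ log(1 + (K−1)·exp(−Kτ/(K−1))). -/

import Mathlib

open scoped BigOperators

/-- Cross-entropy loss: `L_CE(z,k) = log (∑_ℓ exp (z_ℓ)) − z_k`. -/
noncomputable def LCE {K : ℕ} (z : Fin K → ℝ) (k : Fin K) : ℝ :=
  Real.log (∑ ℓ, Real.exp (z ℓ)) - z k

/-- The oblique manifold: matrices all of whose columns have unit Euclidean norm. -/
def OB (p : ℕ) (ι : Type) [Fintype ι] : Set (Matrix (Fin p) ι ℝ) :=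
  {M | ∀ j, ∑ i, (M i j) ^ 2 = 1}

/-- The cross-entropy risk `f(W,H) = (1/N) ∑_k ∑_i L_CE(τ Wᵀ h_{k,i}, k)` with `N = K n`. -/
noncomputable def ceRisk {d K n : ℕ} (τ : ℝ) (W : Matrix (Fin d) (Fin K) ℝ)
    (H : Matrix (Fin d) (Fin K × Fin n) ℝ) : ℝ :=
  (1 / ((K : ℝ) * n)) * ∑ k : Fin K, ∑ i : Fin n,
    LCE (fun ℓ => τ * ∑ r, W r ℓ * H r (k, i)) k

/-- Softplus-type auxiliary function `x ↦ log (1 + c * exp x)`. -/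
noncomputable def gfun (c : ℝ) (x : ℝ) : ℝ := Real.log (1 + c * Real.exp x)

lemma gfun_hasDerivAt {c : ℝ} (hc : 0 < c) (x : ℝ) :
    HasDerivAt (gfun c) (c * Real.exp x / (1 + c * Real.exp x)) x := by
  have h1 : HasDerivAt (fun x => 1 + c * Real.exp x) (c * Real.exp x) x := by
    simpa using ((Real.hasDerivAt_exp x).const_mul c).const_add 1
  exact h1.log (by positivity)

lemma gfun_deriv {c : ℝ} (hc : 0 < c) (x : ℝ) :
    deriv (gfun c) x = c * Real.exp x / (1 + c * Real.exp x) :=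
  (gfun_hasDerivAt hc x).deriv

lemma gfun_convex {c : ℝ} (hc : 0 < c) : ConvexOn ℝ Set.univ (gfun c) := by
  apply Monotone.convexOn_univ_of_deriv
  · exact fun x => (gfun_hasDerivAt hc x).differentiableAt
  · intro x y hxy
    rw [gfun_deriv hc, gfun_deriv hc]
    have hx : 0 < 1 + c * Real.exp x := by positivity
    have hy : 0 < 1 + c * Real.exp y := by positivity
    have h1 : c * Real.exp x / (1 + c * Real.exp x) = 1 - 1 / (1 + c * Real.exp x) := by
      field_simp
      ring
    have h2 : c * Real.exp y / (1 + c * Real.exp y) = 1 - 1 / (1 + c * Real.exp y) := by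
      field_simp
      ring
    rw [h1, h2]
    have hle : 1 + c * Real.exp x ≤ 1 + c * Real.exp y := by
      have := Real.exp_le_exp.2 hxy
      nlinarith
    have := one_div_le_one_div_of_le hx hle
    linarith

lemma gfun_mono {c : ℝ} (hc : 0 < c) : Monotone (gfun c) := by
  intro x y hxy
  apply Real.log_le_log (by positivity)
  have := Real.exp_le_exp.2 hxy
  nlinarith

/-- Per-sample Jensen bound on the cross entropy loss. -/
lemma LCE_ge {K : ℕ} (hK : 2 ≤ K) (z : Fin K → ℝ) (k : Fin K) :
    gfun ((K:ℝ)-1) (((∑ ℓ, z ℓ) - K * z k)/((K:ℝ)-1)) ≤ LCE z k := by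
  have hc : (0:ℝ) < (K:ℝ) - 1 := by
    have : (2:ℝ) ≤ (K:ℝ) := by exact_mod_cast hK
    linarith
  set c : ℝ := (K:ℝ) - 1 with hcdef
  have hsum_pos : 0 < ∑ ℓ, Real.exp (z ℓ) :=
    Finset.sum_pos (fun ℓ _ => Real.exp_pos _) ⟨k, Finset.mem_univ k⟩
  have h1 : LCE z k = Real.log (∑ ℓ, Real.exp (z ℓ - z k)) := by
    have : ∑ ℓ, Real.exp (z ℓ - z k) = (∑ ℓ, Real.exp (z ℓ)) / Real.exp (z k) := by
      simp [Real.exp_sub, Finset.sum_div]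
    rw [this, Real.log_div (ne_of_gt hsum_pos) (Real.exp_ne_zero _), Real.log_exp, LCE]
  rw [h1]
  have h2 : ∑ ℓ, Real.exp (z ℓ - z k)
      = 1 + ∑ ℓ ∈ Finset.univ.erase k, Real.exp (z ℓ - z k) := by
    rw [← Finset.add_sum_erase _ _ (Finset.mem_univ k)]
    simp
  have hcard : ((Finset.univ.erase k).card : ℝ) = c := by
    rw [Finset.card_erase_of_mem (Finset.mem_univ k)]
    simp only [Finset.card_univ, Fintype.card_fin, hcdef]
    push_cast [Nat.cast_sub (le_trans one_le_two hK)]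
    ring
  have hAMGM : c * Real.exp ((∑ ℓ ∈ Finset.univ.erase k, (z ℓ - z k))/c)
      ≤ ∑ ℓ ∈ Finset.univ.erase k, Real.exp (z ℓ - z k) := by
    have hmain := Real.geom_mean_le_arith_mean_weighted (Finset.univ.erase k)
      (fun _ => 1/c) (fun ℓ => Real.exp (z ℓ - z k))
      (fun i _ => by positivity)
      (by rw [Finset.sum_const, nsmul_eq_mul, hcard]; field_simp)
      (fun i _ => (Real.exp_pos _).le)
    have hprod : ∏ ℓ ∈ Finset.univ.erase k, (Real.exp (z ℓ - z k)) ^ ((1:ℝ)/c)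
        = Real.exp ((∑ ℓ ∈ Finset.univ.erase k, (z ℓ - z k))/c) := by
      have : ∀ ℓ ∈ Finset.univ.erase k, (Real.exp (z ℓ - z k)) ^ ((1:ℝ)/c)
          = Real.exp ((z ℓ - z k) * (1/c)) := fun ℓ _ => by
        rw [Real.rpow_def_of_pos (Real.exp_pos _), Real.log_exp]
      rw [Finset.prod_congr rfl this, ← Real.exp_sum]
      congr 1
      rw [Finset.sum_div]
      exact Finset.sum_congr rfl fun ℓ _ => by ring
    rw [hprod] at hmain
    have hms : ∑ i ∈ Finset.univ.erase k, (1/c) * Real.exp (z i - z k)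
        = (1/c) * ∑ i ∈ Finset.univ.erase k, Real.exp (z i - z k) := by
      rw [Finset.mul_sum]
    rw [hms] at hmain
    calc c * Real.exp ((∑ ℓ ∈ Finset.univ.erase k, (z ℓ - z k))/c)
        ≤ c * ((1/c) * ∑ i ∈ Finset.univ.erase k, Real.exp (z i - z k)) :=
          mul_le_mul_of_nonneg_left hmain hc.le
      _ = ∑ i ∈ Finset.univ.erase k, Real.exp (z i - z k) := by field_simp
  have hT : ∑ ℓ ∈ Finset.univ.erase k, (z ℓ - z k) = (∑ ℓ, z ℓ) - K * z k := by
    rw [Finset.sum_sub_distrib, Finset.sum_const, Finset.sum_erase_eq_sub (Finset.mem_univ k),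
      nsmul_eq_mul, hcard]
    ring
  rw [hT] at hAMGM
  rw [gfun, h2]
  apply Real.log_le_log (by positivity)
  linarith

/-- The weight-vector quadratic sum bound `∑_k ‖∑_ℓ w_ℓ − K w_k‖² ≤ K³`. -/
lemma sumQ_le {d K : ℕ} (W : Matrix (Fin d) (Fin K) ℝ)
    (hW : ∀ j, ∑ i, (W i j) ^ 2 = 1) :
    ∑ k : Fin K, (∑ r : Fin d, ((∑ ℓ : Fin K, W r ℓ) - K * W r k)^2) ≤ (K:ℝ)^3 := by
  have expand : ∑ k : Fin K, (∑ r : Fin d, ((∑ ℓ : Fin K, W r ℓ) - K * W r k)^2)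
      = (K:ℝ)^2 * (∑ k : Fin K, ∑ r : Fin d, (W r k)^2)
        - K * ∑ r : Fin d, (∑ ℓ : Fin K, W r ℓ)^2 := by
    rw [Finset.sum_comm]
    have hr : ∀ r : Fin d, ∑ k : Fin K, ((∑ ℓ : Fin K, W r ℓ) - K * W r k)^2
        = (K:ℝ)^2 * (∑ k : Fin K, (W r k)^2) - K * (∑ ℓ : Fin K, W r ℓ)^2 := by
      intro r
      have h1 : ∀ k : Fin K, ((∑ ℓ : Fin K, W r ℓ) - K * W r k)^2
          = (∑ ℓ : Fin K, W r ℓ)^2 - 2*K*(∑ ℓ : Fin K, W r ℓ)*(W r k)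
            + (K:ℝ)^2 * (W r k)^2 := fun k => by ring
      rw [Finset.sum_congr rfl fun k _ => h1 k]
      rw [Finset.sum_add_distrib, Finset.sum_sub_distrib, Finset.sum_const,
        ← Finset.mul_sum, ← Finset.mul_sum]
      simp only [Finset.card_univ, Fintype.card_fin, nsmul_eq_mul]
      ring
    rw [Finset.sum_congr rfl fun r _ => hr r, Finset.sum_sub_distrib,
      ← Finset.mul_sum, ← Finset.mul_sum, Finset.sum_comm]
  rw [expand]
  have h2 : ∑ k : Fin K, ∑ r : Fin d, (W r k)^2 = (K:ℝ) := by
    rw [Finset.sum_congr rfl fun k _ => hW k]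
    simp
  rw [h2]
  have h3 : 0 ≤ ∑ r : Fin d, (∑ ℓ : Fin K, W r ℓ)^2 :=
    Finset.sum_nonneg fun r _ => sq_nonneg _
  have hK0 : (0:ℝ) ≤ K := Nat.cast_nonneg K
  nlinarith

theorem ceRisk_lower_bound (d K n : ℕ) (hK : 2 ≤ K) (hdK : K ≤ d) (hn : 1 ≤ n)
    (τ : ℝ) (hτ : 0 < τ)
    (W : Matrix (Fin d) (Fin K) ℝ) (H : Matrix (Fin d) (Fin K × Fin n) ℝ)
    (hW : W ∈ OB d (Fin K)) (hH : H ∈ OB d (Fin K × Fin n)) :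
    Real.log (1 + ((K : ℝ) - 1) * Real.exp (-((K : ℝ) * τ) / ((K : ℝ) - 1)))
      ≤ ceRisk τ W H := by
  have hc : (0:ℝ) < (K:ℝ) - 1 := by
    have : (2:ℝ) ≤ (K:ℝ) := by exact_mod_cast hK
    linarith
  have hKpos : (0:ℝ) < K := by positivity
  have hnpos : (0:ℝ) < n := by exact_mod_cast hn
  have hNpos : (0:ℝ) < (K:ℝ) * n := by positivity
  set c : ℝ := (K:ℝ) - 1 with hcdef
  -- the centered scores
  set v : Fin K → Fin d → ℝ := fun k r => (∑ ℓ : Fin K, W r ℓ) - K * W r k with hv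
  set t : Fin K × Fin n → ℝ := fun p =>
    (τ * ∑ r : Fin d, v p.1 r * H r p) / c with ht
  -- step 1: per-sample lower bound
  have hstep1 : ∀ k : Fin K, ∀ i : Fin n,
      gfun c (t (k, i)) ≤ LCE (fun ℓ => τ * ∑ r, W r ℓ * H r (k, i)) k := by
    intro k i
    have := LCE_ge hK (fun ℓ => τ * ∑ r, W r ℓ * H r (k, i)) k
    have hnum : (∑ ℓ : Fin K, τ * ∑ r, W r ℓ * H r (k, i))
        - (K:ℝ) * (τ * ∑ r, W r k * H r (k, i))
        = τ * ∑ r : Fin d, v k r * H r (k, i) := by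
      have hswap : ∑ ℓ : Fin K, ∑ r : Fin d, W r ℓ * H r (k, i)
          = ∑ r : Fin d, (∑ ℓ : Fin K, W r ℓ) * H r (k, i) := by
        rw [Finset.sum_comm]
        exact Finset.sum_congr rfl fun r _ => by rw [Finset.sum_mul]
      have hvr : ∑ r : Fin d, v k r * H r (k, i)
          = (∑ r : Fin d, (∑ ℓ : Fin K, W r ℓ) * H r (k, i))
            - K * ∑ r : Fin d, W r k * H r (k, i) := by
        rw [Finset.mul_sum, ← Finset.sum_sub_distrib]
        exact Finset.sum_congr rfl fun r _ => by rw [hv]; ring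
      rw [← Finset.mul_sum, hswap, hvr]
      ring
    rw [hnum] at this
    exact this
  -- step 2: Jensen over the samples
  have hw1 : ∑ _p : Fin K × Fin n, (1 / ((K:ℝ)*n)) = 1 := by
    rw [Finset.sum_const, nsmul_eq_mul]
    simp only [Finset.card_univ, Fintype.card_prod, Fintype.card_fin]
    push_cast
    field_simp
  have hjensen := (gfun_convex hc).map_sum_le
    (t := (Finset.univ : Finset (Fin K × Fin n)))
    (w := fun _ => 1 / ((K:ℝ)*n)) (p := t)
    (fun _ _ => by positivity) hw1 (fun _ _ => Set.mem_univ _)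
  -- step 3: mean bound
  have hQ : ∀ k : Fin K, ∀ i : Fin n,
      -Real.sqrt (∑ r : Fin d, (v k r)^2) ≤ ∑ r : Fin d, v k r * H r (k, i) := by
    intro k i
    have hcs := Finset.sum_mul_sq_le_sq_mul_sq Finset.univ (fun r => v k r)
      (fun r => H r (k, i))
    rw [hH (k, i), mul_one] at hcs
    have habs : |∑ r : Fin d, v k r * H r (k, i)| ≤ Real.sqrt (∑ r : Fin d, (v k r)^2) := by
      rw [← Real.sqrt_sq_eq_abs]
      exact Real.sqrt_le_sqrt (by simpa using hcs)
    linarith [abs_le.1 habs |>.1]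
  have hsumsqrt : ∑ k : Fin K, Real.sqrt (∑ r : Fin d, (v k r)^2) ≤ (K:ℝ)^2 := by
    have hcs := Finset.sum_mul_sq_le_sq_mul_sq Finset.univ (fun _ : Fin K => (1:ℝ))
      (fun k => Real.sqrt (∑ r : Fin d, (v k r)^2))
    simp only [one_pow, one_mul, Finset.sum_const, Finset.card_univ, Fintype.card_fin,
      nsmul_eq_mul, mul_one] at hcs
    have hsq : ∀ k : Fin K, Real.sqrt (∑ r : Fin d, (v k r)^2) ^ 2
        = ∑ r : Fin d, (v k r)^2 := fun k =>
      Real.sq_sqrt (Finset.sum_nonneg fun r _ => sq_nonneg _)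
    rw [Finset.sum_congr rfl fun k _ => hsq k] at hcs
    have hQle := sumQ_le W hW
    have h1 : (∑ k : Fin K, Real.sqrt (∑ r : Fin d, (v k r)^2))^2 ≤ (K:ℝ)^4 := by
      calc (∑ k : Fin K, Real.sqrt (∑ r : Fin d, (v k r)^2))^2
          ≤ (K:ℝ) * ∑ k : Fin K, ∑ r : Fin d, (v k r)^2 := hcs
        _ ≤ (K:ℝ) * (K:ℝ)^3 := by
            apply mul_le_mul_of_nonneg_left _ hKpos.le
            simpa [hv] using hQle
        _ = (K:ℝ)^4 := by ring
    have hnn : 0 ≤ ∑ k : Fin K, Real.sqrt (∑ r : Fin d, (v k r)^2) :=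
      Finset.sum_nonneg fun k _ => Real.sqrt_nonneg _
    nlinarith
  have hsums : -(τ * ((K:ℝ)^2 * n)) ≤ ∑ p : Fin K × Fin n, τ * ∑ r : Fin d, v p.1 r * H r p := by
    have h5 : ∑ k : Fin K, ∑ _i : Fin n, (-(τ * Real.sqrt (∑ r : Fin d, (v k r)^2)))
        = -(τ * n * ∑ k : Fin K, Real.sqrt (∑ r : Fin d, (v k r)^2)) := by
      rw [Finset.sum_congr rfl fun k _ => Finset.sum_const _]
      simp only [Finset.card_univ, Fintype.card_fin, nsmul_eq_mul]
      rw [show ∀ f : Fin K → ℝ, (∑ k, (n:ℝ) * -(τ * f k)) = (-(τ*(n:ℝ))) * ∑ k, f k from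
        fun f => by rw [Finset.mul_sum]; exact Finset.sum_congr rfl fun k _ => by ring]
      ring
    have h4 : ∑ k : Fin K, ∑ i : Fin n, (-(τ * Real.sqrt (∑ r : Fin d, (v k r)^2)))
        ≤ ∑ p : Fin K × Fin n, τ * ∑ r : Fin d, v p.1 r * H r p := by
      rw [Fintype.sum_prod_type]
      refine Finset.sum_le_sum fun k _ => Finset.sum_le_sum fun i _ => ?_
      have := hQ k i
      nlinarith
    rw [h5] at h4
    refine le_trans ?_ h4
    nlinarith [mul_le_mul_of_nonneg_left hsumsqrt (by positivity : (0:ℝ) ≤ τ * n)]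
  have hmean : -((K:ℝ)*τ)/c ≤ ∑ p : Fin K × Fin n, (1 / ((K:ℝ)*n)) * t p := by
    have hrw : ∑ p : Fin K × Fin n, (1 / ((K:ℝ)*n)) * t p
        = (1 / ((K:ℝ)*n*c)) * ∑ p : Fin K × Fin n, τ * ∑ r : Fin d, v p.1 r * H r p := by
      rw [Finset.mul_sum]
      exact Finset.sum_congr rfl fun p _ => by rw [ht]; field_simp
    have heq : -((K:ℝ)*τ)/c = (1 / ((K:ℝ)*n*c)) * (-(τ * ((K:ℝ)^2 * n))) := by
      field_simp
    rw [hrw, heq]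
    exact mul_le_mul_of_nonneg_left hsums (by positivity)
  -- final assembly
  simp only [smul_eq_mul] at hjensen
  have hfinal : ∑ p : Fin K × Fin n, (1 / ((K:ℝ)*n)) * gfun c (t p) ≤ ceRisk τ W H := by
    rw [ceRisk, Finset.mul_sum, Fintype.sum_prod_type]
    refine Finset.sum_le_sum fun k _ => ?_
    rw [Finset.mul_sum]
    refine Finset.sum_le_sum fun i _ => ?_
    exact mul_le_mul_of_nonneg_left (hstep1 k i) (by positivity)
  have hg1 : Real.log (1 + ((K : ℝ) - 1) * Real.exp (-((K : ℝ) * τ) / ((K : ℝ) - 1)))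
      = gfun c (-((K:ℝ)*τ)/c) := rfl
  rw [hg1]
  exact le_trans (gfun_mono hc hmean) (le_trans hjensen hfinal)
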